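/- Consider an instance of P_m||C_max with m ≥ 1 machines and n jobs with processing times p_1 ≥ p_2 ≥ … ≥ p_n ≥ 0, and let k ≥ 3. If the critical machine of an LPT schedule is assigned exactly k jobs, then C^LPT ≤ ((k+1)/k − 1/(k·m)) · C*. -/

import Mathlib

open Finset

/-- Load of machine `i` under schedule `σ` with processing times `p`. -/
def mload {m n : ℕ} (p : Fin n → ℝ) (σ : Fin n → Fin m) (i : Fin m) : ℝ :=
  ∑ j ∈ Finset.univ.filter (fun j => σ j = i), p j

/-- Makespan of a schedule: the maximum machine load. -/
noncomputable def makespan {m n : ℕ} (p : Fin n → ℝ) (σ : Fin n → Fin m) : ℝ :=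
  ⨆ i : Fin m, mload p σ i

/-- Optimal makespan `C*`: minimum makespan over all schedules on `m` machines. -/
noncomputable def optMakespan (m : ℕ) {n : ℕ} (p : Fin n → ℝ) : ℝ :=
  ⨅ σ : Fin n → Fin m, makespan p σ

/-- Processing times are sorted non-increasingly and are nonnegative. -/
def SortedNonneg {n : ℕ} (p : Fin n → ℝ) : Prop :=
  (∀ i j : Fin n, i ≤ j → p j ≤ p i) ∧ ∀ j, 0 ≤ p j

/-- Load of machine `i` just before job `j` is assigned, when all jobs of `T`
are placed first and the remaining jobs are assigned in index order:
it counts all jobs of `T` on machine `i` plus all jobs of index `< j` on machine `i`. -/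
def prefLoad {m n : ℕ} (p : Fin n → ℝ) (σ : Fin n → Fin m) (T : Finset (Fin n))
    (j : Fin n) (i : Fin m) : ℝ :=
  ∑ j' ∈ Finset.univ.filter (fun j' => (j' ∈ T ∨ j' < j) ∧ σ j' = i), p j'

/-- `σ` is a list schedule obtained by first placing all jobs of `T` together on
one machine and then assigning the remaining jobs in index order (i.e. in
non-increasing order of processing time, for sorted `p`), each to a machine of
minimal current load. -/
def IsLSAfter {m n : ℕ} (p : Fin n → ℝ) (T : Finset (Fin n)) (σ : Fin n → Fin m) : Prop :=
  (∀ j ∈ T, ∀ j' ∈ T, σ j = σ j') ∧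
  ∀ j, j ∉ T → ∀ i, prefLoad p σ T j (σ j) ≤ prefLoad p σ T j i

/-- `σ` is an LPT schedule: jobs assigned in order `1,…,n`, each to a machine of
minimal current load. -/
def IsLPT {m n : ℕ} (p : Fin n → ℝ) (σ : Fin n → Fin m) : Prop :=
  IsLSAfter p ∅ σ

/-- `j'` is the critical job of schedule `σ`: it is assigned to a critical machine
(one whose load equals the makespan), and it is the largest-indexed job assigned
to a critical machine. -/
def IsCriticalJob {m n : ℕ} (p : Fin n → ℝ) (σ : Fin n → Fin m) (j' : Fin n) : Prop :=
  mload p σ (σ j') = makespan p σ ∧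
  ∀ j : Fin n, mload p σ (σ j) = makespan p σ → j ≤ j'

/-- The (1-based) position of job `j'` on its machine: the number of jobs of index
`≤ j'` assigned to the same machine as `j'`. -/
def posOn {m n : ℕ} (σ : Fin n → Fin m) (j' : Fin n) : ℕ :=
  (Finset.univ.filter (fun t => σ t = σ j' ∧ t ≤ j')).card

/-- The tuple of the `k` consecutive jobs `j'-k+1, …, j'` (in 1-based terms). -/
def tupleSet {n : ℕ} (j' : Fin n) (k : ℕ) : Finset (Fin n) :=
  Finset.univ.filter (fun t => t ≤ j' ∧ j'.val < t.val + k)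

/-- An LPT′ schedule for critical job `j'`: job `j'` is placed alone on a machine
first, then the remaining jobs are assigned in index order, each to a machine of
minimal current load. -/
def IsLPTprime {m n : ℕ} (p : Fin n → ℝ) (j' : Fin n) (σ' : Fin n → Fin m) : Prop :=
  IsLSAfter p {j'} σ'

/-- An LPT″ schedule for critical job `j'` in position `k`: jobs `j'-k+1,…,j'` are
placed together on one machine first, then the remaining jobs are assigned in
non-increasing order of processing time, each to a machine of minimal current load. -/
def IsLPTsec {m n : ℕ} (p : Fin n → ℝ) (j' : Fin n) (k : ℕ) (σ'' : Fin n → Fin m) : Prop :=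
  IsLSAfter p (tupleSet j' k) σ''


private lemma sum_split_succ {n : ℕ} {M : Type*} [AddCommMonoid M] (tt : ℕ) (htt : tt < n)
    (P : Fin n → Prop) [DecidablePred P] (f : Fin n → M) :
    ∑ t ∈ univ.filter (fun t : Fin n => t.val < tt + 1 ∧ P t), f t
      = (∑ t ∈ univ.filter (fun t : Fin n => t.val < tt ∧ P t), f t)
        + if P ⟨tt, htt⟩ then f ⟨tt, htt⟩ else 0 := by
  classical
  by_cases hP : P ⟨tt, htt⟩
  · rw [if_pos hP]
    have hins : univ.filter (fun t : Fin n => t.val < tt + 1 ∧ P t)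
        = insert ⟨tt, htt⟩ (univ.filter (fun t : Fin n => t.val < tt ∧ P t)) := by
      ext t
      simp only [mem_filter, mem_univ, true_and, mem_insert, Nat.lt_succ_iff_lt_or_eq]
      constructor
      · rintro ⟨h1 | h1, h2⟩
        · exact Or.inr ⟨h1, h2⟩
        · exact Or.inl (Fin.ext h1)
      · rintro (rfl | ⟨h1, h2⟩)
        · exact ⟨Or.inr rfl, hP⟩
        · exact ⟨Or.inl h1, h2⟩
    rw [hins, Finset.sum_insert (by simp)]
    exact add_comm _ _
  · rw [if_neg hP, add_zero]
    apply Finset.sum_congr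
    · ext t
      simp only [mem_filter, mem_univ, true_and, Nat.lt_succ_iff_lt_or_eq]
      constructor
      · rintro ⟨h1 | h1, h2⟩
        · exact ⟨h1, h2⟩
        · exact absurd h2 (by cases (Fin.ext h1 : t = ⟨tt, htt⟩); exact hP)
      · rintro ⟨h1, h2⟩; exact ⟨Or.inl h1, h2⟩
    · intros; rfl

private lemma claimM {m n : ℕ} (p : Fin n → ℝ) (σ : Fin n → Fin m)
    (hsort : ∀ a b : Fin n, a ≤ b → p b ≤ p a)
    (hmin : ∀ (t : Fin n) (c : Fin m),
      (∑ t' ∈ univ.filter (fun t' => t' < t ∧ σ t' = σ t), p t')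
        ≤ ∑ t' ∈ univ.filter (fun t' => t' < t ∧ σ t' = c), p t')
    (j' : Fin n) (hq : 0 < p j') (g : Fin m) :
    ((univ.filter (fun t => t < j' ∧ σ t = σ j')).card : ℤ)
      ≤ ∑ t ∈ univ.filter (fun t => t < j' ∧ σ t = g), ⌊p t / p j'⌋ := by
  classical
  set q := p j' with hq_def
  set h := σ j' with hh_def
  -- basic floor facts for any job before j'
  have hfl1 : ∀ t : Fin n, t < j' → 1 ≤ ⌊p t / q⌋ := by
    intro t ht
    rw [Int.le_floor]
    push_cast
    rw [le_div_iff₀ hq, one_mul]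
    exact hsort t j' ht.le
  by_cases hgh : g = h
  · subst hgh
    rw [Finset.card_eq_sum_ones]
    push_cast
    apply Finset.sum_le_sum
    intro t ht
    simp only [mem_filter] at ht
    exact_mod_cast hfl1 t ht.2.1
  -- main case : g ≠ h
  set Xs : ℕ → ℝ := fun tt => ∑ t ∈ univ.filter (fun t : Fin n => t.val < tt ∧ σ t = g), p t with hXs_def
  set As : ℕ → ℝ := fun tt => ∑ t ∈ univ.filter (fun t : Fin n => t.val < tt ∧ σ t = h), p t with hAs_def
  set Fs : ℕ → ℤ := fun tt => ∑ t ∈ univ.filter (fun t : Fin n => t.val < tt ∧ σ t = g), ⌊p t / q⌋ with hFs_def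
  set Ns : ℕ → ℤ := fun tt => ∑ t ∈ univ.filter (fun t : Fin n => t.val < tt ∧ σ t = h), (1:ℤ) with hNs_def
  have key : ∀ tt, tt ≤ j'.val →
      ((0 ≤ Fs tt - Ns tt ∧ Xs tt - As tt < ((Fs tt - Ns tt : ℤ) : ℝ) * q + q) ∨
       (∃ t₀ : Fin n, t₀.val < tt ∧ Xs tt - As tt < q - p t₀ ∧ Fs tt - Ns tt = -1)) := by
    intro tt
    induction tt with
    | zero =>
      intro _
      left
      have he : univ.filter (fun t : Fin n => t.val < 0 ∧ σ t = g) = ∅ := by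
        ext t; simp
      have he' : univ.filter (fun t : Fin n => t.val < 0 ∧ σ t = h) = ∅ := by
        ext t; simp
      simp [hXs_def, hAs_def, hFs_def, hNs_def, he, he', hq]
    | succ tt ih =>
      intro htt1
      have httj : tt < j'.val := htt1
      have htn : tt < n := lt_trans httj j'.isLt
      set t : Fin n := ⟨tt, htn⟩ with ht_def
      have htj : t < j' := httj
      have hptq : q ≤ p t := hsort t j' htj.le
      have ihh := ih (le_of_lt httj)
      -- step equations
      have hXstep := sum_split_succ (M := ℝ) tt htn (fun t : Fin n => σ t = g) p
      have hAstep := sum_split_succ (M := ℝ) tt htn (fun t : Fin n => σ t = h) p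
      have hFstep := sum_split_succ (M := ℤ) tt htn (fun t : Fin n => σ t = g) (fun t => ⌊p t / q⌋)
      have hNstep := sum_split_succ (M := ℤ) tt htn (fun t : Fin n => σ t = h) (fun _ => (1:ℤ))
      -- min-load conversions
      have hconv : ∀ c : Fin m, univ.filter (fun t' : Fin n => t' < t ∧ σ t' = c)
          = univ.filter (fun t' : Fin n => t'.val < tt ∧ σ t' = c) := by
        intro c; ext t'
        simp only [mem_filter, mem_univ, true_and]; exact Iff.rfl
      by_cases hg : σ t = g
      · -- x-step
        have hneh : ¬ (σ t = h) := by rw [hg]; exact hgh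
        have hXt : Xs (tt+1) = Xs tt + p t := by
          rw [hXs_def]; simp only []; rw [hXstep, if_pos hg]
        have hAt : As (tt+1) = As tt := by
          rw [hAs_def]; simp only []; rw [hAstep, if_neg hneh, add_zero]
        have hFt : Fs (tt+1) = Fs tt + ⌊p t / q⌋ := by
          rw [hFs_def]; simp only []; rw [hFstep, if_pos hg]
        have hNt : Ns (tt+1) = Ns tt := by
          rw [hNs_def]; simp only []; rw [hNstep, if_neg hneh, add_zero]
        -- precondition : g-machine is min when t assigned : Xs tt ≤ As tt
        have hpre : Xs tt ≤ As tt := by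
          have := hmin t h
          rw [hg] at this
          rw [hconv g, hconv h] at this
          exact this
        have hfl2 : p t < ((⌊p t / q⌋ : ℤ) : ℝ) * q + q := by
          have := Int.lt_floor_add_one (p t / q)
          have h2 : p t / q * q < (((⌊p t / q⌋ : ℤ) : ℝ) + 1) * q := by
            exact mul_lt_mul_of_pos_right this hq
          rw [div_mul_cancel₀ _ (ne_of_gt hq)] at h2
          linarith [h2]
        have hfl1t : (1:ℝ) ≤ ((⌊p t / q⌋ : ℤ) : ℝ) := by exact_mod_cast hfl1 t htj
        rcases ihh with ⟨hk0, hD⟩ | ⟨t₀, ht₀, hD, hk⟩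
        · left
          constructor
          · have : (1:ℤ) ≤ ⌊p t / q⌋ := hfl1 t htj
            rw [hFt, hNt]; omega
          · rw [hXt, hAt, hFt, hNt]
            have hk0' : (0:ℝ) ≤ ((Fs tt - Ns tt : ℤ) : ℝ) := by exact_mod_cast hk0
            have hqpos := hq
            push_cast
            push_cast at hk0' hD
            nlinarith [hk0', hfl2, hfl1t, hpre, hq]
        · left
          constructor
          · have : (1:ℤ) ≤ ⌊p t / q⌋ := hfl1 t htj
            rw [hFt, hNt]; omega
          · rw [hXt, hAt, hFt, hNt]
            have hpt₀ : p t ≤ p t₀ := hsort t₀ t (by exact Fin.le_def.mpr (le_of_lt ht₀))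
            have hk' : ((Fs tt - Ns tt : ℤ) : ℝ) = -1 := by rw [hk]; norm_num
            push_cast
            push_cast at hk' hD
            nlinarith [hD, hpt₀, hfl1t, hq, hk']
      · by_cases hh2 : σ t = h
        · -- a-step
          have hXt : Xs (tt+1) = Xs tt := by
            rw [hXs_def]; simp only []; rw [hXstep, if_neg hg, add_zero]
          have hAt : As (tt+1) = As tt + p t := by
            rw [hAs_def]; simp only []; rw [hAstep, if_pos hh2]
          have hFt : Fs (tt+1) = Fs tt := by
            rw [hFs_def]; simp only []; rw [hFstep, if_neg hg, add_zero]
          have hNt : Ns (tt+1) = Ns tt + 1 := by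
            rw [hNs_def]; simp only []; rw [hNstep, if_pos hh2]
          have hpre : As tt ≤ Xs tt := by
            have := hmin t g
            rw [hh2] at this
            rw [hconv g, hconv h] at this
            exact this
          rcases ihh with ⟨hk0, hD⟩ | ⟨t₀, ht₀, hD, hk⟩
          · rcases eq_or_lt_of_le hk0 with hk00 | hk01
            · -- k̂ = 0 : move to second disjunct with t₀ := t
              right
              refine ⟨t, Nat.lt_succ_self tt, ?_, ?_⟩
              · rw [hXt, hAt]
                have hk0' : ((Fs tt - Ns tt : ℤ) : ℝ) = 0 := by rw [← hk00]; norm_num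
                push_cast at hk0' hD ⊢
                nlinarith [hD, hk0']
              · rw [hFt, hNt]; omega
            · left
              constructor
              · rw [hFt, hNt]; omega
              · rw [hXt, hAt, hFt, hNt]
                have hk1 : (1:ℝ) ≤ ((Fs tt - Ns tt : ℤ) : ℝ) := by exact_mod_cast hk01
                push_cast
                push_cast at hD hk1
                nlinarith [hD, hptq, hk1, hq]
          · -- second disjunct : contradiction with As ≤ Xs
            exfalso
            have ht₀j : t₀ < j' := lt_trans (Fin.lt_def.mpr ht₀) htj
            have : q ≤ p t₀ := hsort t₀ j' ht₀j.le
            linarith [hD, hpre, this]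
        · -- neither
          have hXt : Xs (tt+1) = Xs tt := by
            rw [hXs_def]; simp only []; rw [hXstep, if_neg hg, add_zero]
          have hAt : As (tt+1) = As tt := by
            rw [hAs_def]; simp only []; rw [hAstep, if_neg hh2, add_zero]
          have hFt : Fs (tt+1) = Fs tt := by
            rw [hFs_def]; simp only []; rw [hFstep, if_neg hg, add_zero]
          have hNt : Ns (tt+1) = Ns tt := by
            rw [hNs_def]; simp only []; rw [hNstep, if_neg hh2, add_zero]
          rcases ihh with ⟨hk0, hD⟩ | ⟨t₀, ht₀, hD, hk⟩
          · left; rw [hXt, hAt, hFt, hNt]; exact ⟨hk0, hD⟩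
          · right; exact ⟨t₀, Nat.lt_succ_of_lt ht₀, by rw [hXt, hAt]; exact hD, by rw [hFt, hNt]; exact hk⟩
  -- conclude at tt = j'.val
  have hfin := key j'.val le_rfl
  have hconvj : ∀ c : Fin m, univ.filter (fun t' : Fin n => t' < j' ∧ σ t' = c)
      = univ.filter (fun t' : Fin n => t'.val < j'.val ∧ σ t' = c) := by
    intro c; ext t'; simp only [mem_filter, mem_univ, true_and, Fin.lt_def]
  have hpre : As j'.val ≤ Xs j'.val := by
    have := hmin j' g
    rw [← hh_def] at this
    rw [hconvj g, hconvj h] at this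
    exact this
  rcases hfin with ⟨hk0, _⟩ | ⟨t₀, ht₀, hD, _⟩
  · -- Ns ≤ Fs
    have e2 : ((univ.filter (fun t' : Fin n => t'.val < j'.val ∧ σ t' = h)).card : ℤ)
        = Ns j'.val := by
      rw [Finset.card_eq_sum_ones]; push_cast; rfl
    have e1 : (∑ t ∈ univ.filter (fun t' : Fin n => t'.val < j'.val ∧ σ t' = g), ⌊p t / q⌋)
        = Fs j'.val := rfl
    rw [hconvj g, hconvj h, e1, e2]
    linarith [hk0]
  · exfalso
    have ht₀j : t₀ < j' := Fin.lt_def.mpr ht₀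
    have : q ≤ p t₀ := hsort t₀ j' ht₀j.le
    linarith [hD, hpre, this]

private lemma mload_le_makespan {m n : ℕ} (hm : 1 ≤ m) (p : Fin n → ℝ) (τ : Fin n → Fin m)
    (c : Fin m) : mload p τ c ≤ makespan p τ := by
  have : Nonempty (Fin m) := ⟨⟨0, hm⟩⟩
  exact le_ciSup (Set.Finite.bddAbove (Set.finite_range _)) c

private lemma sum_mload {m n : ℕ} (p : Fin n → ℝ) (τ : Fin n → Fin m) :
    ∑ c : Fin m, mload p τ c = ∑ t, p t := by
  exact Finset.sum_fiberwise_of_maps_to (fun x _ => mem_univ _) p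

private lemma total_le_makespan {m n : ℕ} (hm : 1 ≤ m) (p : Fin n → ℝ) (τ : Fin n → Fin m) :
    ∑ t, p t ≤ (m : ℝ) * makespan p τ := by
  rw [← sum_mload p τ]
  calc ∑ c : Fin m, mload p τ c ≤ ∑ _c : Fin m, makespan p τ :=
        Finset.sum_le_sum (fun c _ => mload_le_makespan hm p τ c)
    _ = (m : ℝ) * makespan p τ := by rw [Finset.sum_const]; simp [nsmul_eq_mul]

private lemma makespan_nonneg {m n : ℕ} (hm : 1 ≤ m) (p : Fin n → ℝ) (hp : ∀ t, 0 ≤ p t)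
    (τ : Fin n → Fin m) : 0 ≤ makespan p τ := by
  refine le_trans ?_ (mload_le_makespan hm p τ ⟨0, hm⟩)
  exact Finset.sum_nonneg (fun t _ => hp t)

private lemma opt_bounds {m n : ℕ} (hm : 1 ≤ m) (p : Fin n → ℝ) (b : ℝ)
    (hb : ∀ τ : Fin n → Fin m, b ≤ makespan p τ) : b ≤ optMakespan m p := by
  have : Nonempty (Fin m) := ⟨⟨0, hm⟩⟩
  exact le_ciInf hb


/-- bound `r_k`, `k ≥ 3`: if the critical machine of an LPT schedule
is assigned exactly `k ≥ 3` jobs, then `C^LPT ≤ ((k+1)/k − 1/(k·m)) · C*`. -/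
theorem stmt17 {m n : ℕ} (hm : 1 ≤ m) (k : ℕ) (hk : 3 ≤ k)
    (p : Fin n → ℝ) (hp : SortedNonneg p)
    (σ : Fin n → Fin m) (hσ : IsLPT p σ)
    (i : Fin m) (hcritM : mload p σ i = makespan p σ)
    (hcard : (Finset.univ.filter (fun t => σ t = i)).card = k) :
    makespan p σ ≤ (((k : ℝ) + 1) / k - 1 / ((k : ℝ) * m)) * optMakespan m p := by
  classical
  obtain ⟨hsort, hpn⟩ := hp
  have hmNE : Nonempty (Fin m) := ⟨⟨0, hm⟩⟩
  -- min-load property in clean form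
  have hmin : ∀ (t : Fin n) (c : Fin m),
      (∑ t' ∈ univ.filter (fun t' => t' < t ∧ σ t' = σ t), p t')
        ≤ ∑ t' ∈ univ.filter (fun t' => t' < t ∧ σ t' = c), p t' := by
    intro t c
    have h0 := hσ.2 t (by simp) c
    simpa [prefLoad] using h0
  -- the critical job j' : the max-index job on machine i
  have hSne : (univ.filter (fun t => σ t = i)).Nonempty := by
    rw [← Finset.card_pos, hcard]; omega
  set j' := (univ.filter (fun t => σ t = i)).max' hSne with hj'_def
  have hj'S : j' ∈ univ.filter (fun t => σ t = i) := Finset.max'_mem _ hSne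
  have hj'i : σ j' = i := (mem_filter.mp hj'S).2
  have hSP : univ.filter (fun t => σ t = i)
      = insert j' (univ.filter (fun t => t < j' ∧ σ t = i)) := by
    ext t
    simp only [mem_filter, mem_univ, true_and, mem_insert]
    constructor
    · intro hti
      rcases lt_or_eq_of_le (Finset.le_max' (univ.filter (fun t => σ t = i)) t
          (mem_filter.mpr ⟨mem_univ t, hti⟩)) with h1 | h1
      · exact Or.inr ⟨h1, hti⟩
      · exact Or.inl h1
    · rintro (rfl | ⟨_, hti⟩)
      · exact hj'i
      · exact hti
  have hj'P : j' ∉ univ.filter (fun t => t < j' ∧ σ t = i) := by simp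
  have hPcard : (((univ.filter (fun t => t < j' ∧ σ t = i)).card : ℤ)) = (k : ℤ) - 1 := by
    have h1 : (univ.filter (fun t => σ t = i)).card
        = (univ.filter (fun t => t < j' ∧ σ t = i)).card + 1 := by
      rw [hSP, Finset.card_insert_of_notMem hj'P]
    rw [hcard] at h1
    omega
  have hq0 : 0 ≤ p j' := hpn j'
  -- makespan value
  have hmval : makespan p σ = p j' + ∑ t ∈ univ.filter (fun t => t < j' ∧ σ t = i), p t := by
    rw [← hcritM]
    show (∑ t ∈ Finset.univ.filter (fun t => σ t = i), p t) = _
    rw [hSP, Finset.sum_insert hj'P]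
  -- m * (load of i before j') ≤ sum of jobs before j'
  have hfib : ∑ c : Fin m, (∑ t ∈ univ.filter (fun t => t < j' ∧ σ t = c), p t)
      = ∑ t ∈ univ.filter (fun t => t < j'), p t := by
    have h0 := Finset.sum_fiberwise_of_maps_to
      (s := univ.filter (fun t : Fin n => t < j')) (t := (univ : Finset (Fin m)))
      (g := σ) (f := p) (fun x _ => mem_univ _)
    simpa [Finset.filter_filter] using h0
  have hm_pre : (m : ℝ) * (∑ t ∈ univ.filter (fun t => t < j' ∧ σ t = i), p t)
      ≤ ∑ t ∈ univ.filter (fun t => t < j'), p t := by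
    rw [← hfib]
    have h1 : ∀ c : Fin m, (∑ t ∈ univ.filter (fun t => t < j' ∧ σ t = i), p t)
        ≤ ∑ t ∈ univ.filter (fun t => t < j' ∧ σ t = c), p t := by
      intro c
      have h2 := hmin j' c
      rwa [hj'i] at h2
    calc (m : ℝ) * (∑ t ∈ univ.filter (fun t => t < j' ∧ σ t = i), p t)
        = ∑ _c : Fin m, (∑ t ∈ univ.filter (fun t => t < j' ∧ σ t = i), p t) := by
          rw [Finset.sum_const]; simp [nsmul_eq_mul]
      _ ≤ _ := Finset.sum_le_sum (fun c _ => h1 c)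
  have hlt_le : ∑ t ∈ univ.filter (fun t => t < j'), p t ≤ (∑ t, p t) - p j' := by
    have hsplit := Finset.sum_filter_add_sum_filter_not univ (fun t : Fin n => t < j') p
    have h2 : p j' ≤ ∑ t ∈ univ.filter (fun t => ¬ t < j'), p t :=
      Finset.single_le_sum (f := p) (fun t _ => hpn t) (by simp)
    linarith
  -- k * p j' ≤ optimal makespan
  have hkq : (k : ℝ) * p j' ≤ optMakespan m p := by
    rcases hq0.lt_or_eq with hq | hq
    · -- positive case : use claimM and pigeonhole
      have hfloor_tot : (m : ℤ) * ((k : ℤ) - 1) + 1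
          ≤ ∑ t ∈ univ.filter (fun t => t ≤ j'), ⌊p t / p j'⌋ := by
        have hins : univ.filter (fun t : Fin n => t ≤ j')
            = insert j' (univ.filter (fun t => t < j')) := by
          ext t
          simp only [mem_filter, mem_univ, true_and, mem_insert]
          constructor
          · intro h1
            rcases lt_or_eq_of_le h1 with h2 | h2
            · exact Or.inr h2
            · exact Or.inl h2
          · rintro (rfl | h1)
            · exact le_refl _
            · exact h1.le
        rw [hins, Finset.sum_insert (by simp)]
        have h1 : ⌊p j' / p j'⌋ = 1 := by
          rw [div_self (ne_of_gt hq)]; exact Int.floor_one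
        have hfib2 : ∑ c : Fin m, (∑ t ∈ univ.filter (fun t => t < j' ∧ σ t = c), ⌊p t / p j'⌋)
            = ∑ t ∈ univ.filter (fun t => t < j'), ⌊p t / p j'⌋ := by
          have h0 := Finset.sum_fiberwise_of_maps_to
            (s := univ.filter (fun t : Fin n => t < j')) (t := (univ : Finset (Fin m)))
            (g := σ) (f := fun t => ⌊p t / p j'⌋) (fun x _ => mem_univ _)
          simpa [Finset.filter_filter] using h0
        have hlow : ∀ c : Fin m, ((k : ℤ) - 1)
            ≤ ∑ t ∈ univ.filter (fun t => t < j' ∧ σ t = c), ⌊p t / p j'⌋ := by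
          intro c
          have h2 := claimM p σ hsort hmin j' hq c
          rw [hj'i] at h2
          linarith [hPcard, h2]
        have h3 : (m : ℤ) * ((k : ℤ) - 1)
            ≤ ∑ t ∈ univ.filter (fun t => t < j'), ⌊p t / p j'⌋ := by
          rw [← hfib2]
          have h4 := Finset.card_nsmul_le_sum univ
            (fun c : Fin m => ∑ t ∈ univ.filter (fun t => t < j' ∧ σ t = c), ⌊p t / p j'⌋)
            ((k : ℤ) - 1) (fun c _ => hlow c)
          simpa [Finset.card_univ, nsmul_eq_mul] using h4
        omega
      apply opt_bounds hm
      intro τ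
      have hwsum : ∑ c : Fin m, (∑ t ∈ univ.filter (fun t => t ≤ j' ∧ τ t = c), ⌊p t / p j'⌋)
          = ∑ t ∈ univ.filter (fun t => t ≤ j'), ⌊p t / p j'⌋ := by
        have h0 := Finset.sum_fiberwise_of_maps_to
          (s := univ.filter (fun t : Fin n => t ≤ j')) (t := (univ : Finset (Fin m)))
          (g := τ) (f := fun t => ⌊p t / p j'⌋) (fun x _ => mem_univ _)
        simpa [Finset.filter_filter] using h0
      have hex : ∃ c, (k : ℤ) ≤ ∑ t ∈ univ.filter (fun t => t ≤ j' ∧ τ t = c), ⌊p t / p j'⌋ := by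
        by_contra hcon
        push_neg at hcon
        have hle : ∀ c ∈ (univ : Finset (Fin m)),
            (∑ t ∈ univ.filter (fun t => t ≤ j' ∧ τ t = c), ⌊p t / p j'⌋) ≤ (k : ℤ) - 1 := by
          intro c _
          have := hcon c
          omega
        have h5 := Finset.sum_le_card_nsmul univ
          (fun c : Fin m => ∑ t ∈ univ.filter (fun t => t ≤ j' ∧ τ t = c), ⌊p t / p j'⌋)
          ((k : ℤ) - 1) hle
        rw [hwsum] at h5
        simp only [Finset.card_univ, Fintype.card_fin, nsmul_eq_mul] at h5
        omega
      obtain ⟨c, hc⟩ := hex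
      have h1 : (k : ℝ) * p j'
          ≤ p j' * (((∑ t ∈ univ.filter (fun t => t ≤ j' ∧ τ t = c), ⌊p t / p j'⌋) : ℤ) : ℝ) := by
        rw [mul_comm]
        apply mul_le_mul_of_nonneg_left _ hq0
        exact_mod_cast hc
      have h2 : p j' * (((∑ t ∈ univ.filter (fun t => t ≤ j' ∧ τ t = c), ⌊p t / p j'⌋) : ℤ) : ℝ)
          ≤ ∑ t ∈ univ.filter (fun t => t ≤ j' ∧ τ t = c), p t := by
        push_cast
        rw [Finset.mul_sum]
        apply Finset.sum_le_sum
        intro t _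
        have h3 := Int.floor_le (p t / p j')
        have h4 : p j' * ((⌊p t / p j'⌋ : ℤ) : ℝ) ≤ p j' * (p t / p j') :=
          mul_le_mul_of_nonneg_left h3 hq0
        rwa [mul_div_cancel₀ _ (ne_of_gt hq)] at h4
      have h5 : ∑ t ∈ univ.filter (fun t => t ≤ j' ∧ τ t = c), p t ≤ mload p τ c := by
        apply Finset.sum_le_sum_of_subset_of_nonneg
        · intro t ht
          simp only [mem_filter, mem_univ, true_and] at *
          exact ht.2
        · intro t _ _
          exact hpn t
      linarith [mload_le_makespan hm p τ c]
    · -- p j' = 0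
      rw [← hq, mul_zero]
      exact opt_bounds hm p 0 (makespan_nonneg hm p hpn)
  -- final algebra
  have hSC : ∑ t, p t ≤ (m : ℝ) * optMakespan m p := by
    have hmpos : (0 : ℝ) < m := by exact_mod_cast hm
    have h1 : (∑ t, p t) / m ≤ optMakespan m p := by
      apply opt_bounds hm
      intro τ
      rw [div_le_iff₀ hmpos]
      calc ∑ t, p t ≤ (m : ℝ) * makespan p τ := total_le_makespan hm p τ
        _ = makespan p τ * m := mul_comm _ _
    calc ∑ t, p t = ((∑ t, p t) / m) * m := by field_simp
      _ ≤ optMakespan m p * m := by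
          apply mul_le_mul_of_nonneg_right h1 hmpos.le
      _ = (m : ℝ) * optMakespan m p := mul_comm _ _
  have hC0 : 0 ≤ optMakespan m p := opt_bounds hm p 0 (makespan_nonneg hm p hpn)
  have hmpos : (0 : ℝ) < m := by exact_mod_cast hm
  have hkpos : (0 : ℝ) < k := by
    have : (3 : ℝ) ≤ k := by exact_mod_cast hk
    linarith
  have hm1 : (1 : ℝ) ≤ m := by exact_mod_cast hm
  -- k*m*makespan ≤ (k*m + m - 1) * C
  have hkey : (k : ℝ) * m * makespan p σ
      ≤ ((k : ℝ) * m + m - 1) * optMakespan m p := by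
    have hM : (m : ℝ) * makespan p σ ≤ (∑ t, p t) + ((m : ℝ) - 1) * p j' := by
      rw [hmval]
      have := hm_pre
      have := hlt_le
      nlinarith
    nlinarith [hM, hSC, hkq, hC0, hq0, hkpos, hm1]
  have hcoef : (((k : ℝ) + 1) / k - 1 / ((k : ℝ) * m))
      = ((k : ℝ) * m + m - 1) / ((k : ℝ) * m) := by
    field_simp
  rw [hcoef, div_mul_eq_mul_div, le_div_iff₀ (by positivity)]
  calc makespan p σ * ((k : ℝ) * m) = (k : ℝ) * m * makespan p σ := by ring
    _ ≤ _ := hkey
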